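/- Let α/β = [b_1, b_2, ..., b_r] with all b_i ≥ 2 and let [c_1, ..., c_k] be the dual expansion of [b_2, ..., b_r] (i.e., if [b_2,...,b_r] = α'/β' then α'/(α'−β') = [c_1,...,c_k]). Then the dual expansion [a_1, ..., a_n] of α/β satisfies [a_1, ..., a_n] = [2, 2, ..., 2, c_1 + 1, c_2, ..., c_k] with exactly (b_1 − 2) leading 2's. -/

import Mathlib

/-- Negative (Hirzebruch–Jung) continued fraction:
`[b] = b`, `[b₁,...,b_r] = b₁ - 1/[b₂,...,b_r]`. -/
def ncf : List ℤ → ℚ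
  | [] => 0
  | b :: l => if l = [] then (b : ℚ) else (b : ℚ) - 1 / ncf l

lemma ncf_single (b : ℤ) : ncf [b] = (b:ℚ) := by simp [ncf]

lemma ncf_cons (b : ℤ) (l : List ℤ) (hl : l ≠ []) :
    ncf (b :: l) = (b:ℚ) - 1 / ncf l := by simp [ncf, hl]

lemma ncf_gt_one : ∀ l : List ℤ, l ≠ [] → (∀ x ∈ l, 2 ≤ x) → 1 < ncf l
  | [], h, _ => absurd rfl h
  | [b], _, h2 => by
      have hb : (2:ℤ) ≤ b := h2 b (by simp)
      rw [ncf_single]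
      exact_mod_cast lt_of_lt_of_le one_lt_two (by exact_mod_cast hb)
  | b :: c :: t, _, h2 => by
      have ht : 1 < ncf (c :: t) :=
        ncf_gt_one (c :: t) (by simp) (fun x hx => h2 x (by simp at hx ⊢; tauto))
      rw [ncf_cons b _ (by simp)]
      have hb : (2:ℚ) ≤ (b:ℚ) := by exact_mod_cast h2 b (by simp)
      have h0 : 0 < ncf (c::t) := lt_trans one_pos ht
      have h1 : 1 / ncf (c::t) < 1 := by rw [div_lt_one h0]; exact ht
      have h00 : 0 < 1 / ncf (c::t) := by positivity
      linarith

lemma int_eq_of_close {a b : ℤ} (h1 : (-1:ℚ) < (a:ℚ) - b) (h2 : ((a:ℚ) - b) < 1) : a = b := by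
  have k1 : (-1:ℤ) < a - b := by exact_mod_cast (by push_cast; linarith : ((-1:ℤ):ℚ) < ((a - b:ℤ):ℚ))
  have k2 : a - b < 1 := by exact_mod_cast (by push_cast; linarith : ((a - b:ℤ):ℚ) < ((1:ℤ):ℚ))
  omega

lemma ncf_unique : ∀ (l l' : List ℤ), (∀ x ∈ l, 2 ≤ x) → (∀ x ∈ l', 2 ≤ x) →
    l ≠ [] → l' ≠ [] → ncf l = ncf l' → l = l'
  | [], _, _, _, h, _, _ => absurd rfl h
  | _ :: _, [], _, _, _, h, _ => absurd rfl h
  | [b], [b'], _, _, _, _, heq => by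
      rw [ncf_single, ncf_single] at heq
      norm_cast at heq
      simp [heq]
  | [b], b' :: c' :: t', h2, h2', _, _, heq => by
      exfalso
      have ht : 1 < ncf (c' :: t') :=
        ncf_gt_one _ (by simp) (fun x hx => h2' x (by simp at hx ⊢; tauto))
      have h0 : 0 < ncf (c'::t') := lt_trans one_pos ht
      rw [ncf_single, ncf_cons b' _ (by simp)] at heq
      have h1 : 1 / ncf (c'::t') < 1 := by rw [div_lt_one h0]; exact ht
      have h00 : 0 < 1 / ncf (c'::t') := by positivity
      have := int_eq_of_close (a := b) (b := b') (by linarith) (by linarith)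
      subst this
      linarith
  | b :: c :: t, [b'], h2, h2', _, _, heq => by
      exfalso
      have ht : 1 < ncf (c :: t) :=
        ncf_gt_one _ (by simp) (fun x hx => h2 x (by simp at hx ⊢; tauto))
      have h0 : 0 < ncf (c::t) := lt_trans one_pos ht
      rw [ncf_cons b _ (by simp), ncf_single] at heq
      have h1 : 1 / ncf (c::t) < 1 := by rw [div_lt_one h0]; exact ht
      have h00 : 0 < 1 / ncf (c::t) := by positivity
      have := int_eq_of_close (a := b) (b := b') (by linarith) (by linarith)
      subst this
      linarith
  | b :: c :: t, b' :: c' :: t', h2, h2', _, _, heq => by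
      have ht : 1 < ncf (c :: t) :=
        ncf_gt_one _ (by simp) (fun x hx => h2 x (by simp at hx ⊢; tauto))
      have ht' : 1 < ncf (c' :: t') :=
        ncf_gt_one _ (by simp) (fun x hx => h2' x (by simp at hx ⊢; tauto))
      have h0 : 0 < ncf (c::t) := lt_trans one_pos ht
      have h0' : 0 < ncf (c'::t') := lt_trans one_pos ht'
      rw [ncf_cons b _ (by simp), ncf_cons b' _ (by simp)] at heq
      have h1 : 1 / ncf (c::t) < 1 := by rw [div_lt_one h0]; exact ht
      have h00 : 0 < 1 / ncf (c::t) := by positivity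
      have h1' : 1 / ncf (c'::t') < 1 := by rw [div_lt_one h0']; exact ht'
      have h00' : 0 < 1 / ncf (c'::t') := by positivity
      have hbb : b = b' := int_eq_of_close (by linarith) (by linarith)
      subst hbb
      have hy : ncf (c::t) = ncf (c'::t') := by
        have h : 1 / ncf (c::t) = 1 / ncf (c'::t') := by linarith
        field_simp at h
        exact h.symm
      have h3 := ncf_unique (c::t) (c'::t') (fun x hx => h2 x (by simp at hx ⊢; tauto))
        (fun x hx => h2' x (by simp at hx ⊢; tauto)) (by simp) (by simp) hy
      rw [h3]

lemma ncf_replicate (L : List ℤ) (hL : L ≠ []) (hy : 1 < ncf L) :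
    ∀ m : ℕ, ncf (List.replicate m 2 ++ L)
      = ((m+1) * ncf L - m) / (m * ncf L - m + 1)
  | 0 => by simp
  | m+1 => by
    have hne : List.replicate m 2 ++ L ≠ [] := by simp [hL]
    have ih := ncf_replicate L hL hy m
    have hden : (0:ℚ) < (m+1) * ncf L - m := by
      have : (0:ℚ) ≤ (m:ℚ) := by positivity
      nlinarith
    have hden2 : (0:ℚ) < (m:ℚ) * ncf L - m + 1 := by
      have : (0:ℚ) ≤ (m:ℚ) := by positivity
      nlinarith
    rw [List.replicate_succ, List.cons_append, ncf_cons 2 _ hne, ih]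
    push_cast
    rw [one_div_div]
    have hden3 : ((m:ℚ)+1) * ncf L - (m+1) + 1 ≠ 0 := by
      intro h; apply hden.ne'; linarith [h]
    rw [sub_div' hden.ne', div_eq_div_iff hden.ne' hden3]
    ring

lemma ncf_add_one (c : ℤ) (C : List ℤ) : ncf ((c+1) :: C) = ncf (c :: C) + 1 := by
  cases C with
  | nil => rw [ncf_single, ncf_single]; push_cast; ring
  | cons d t =>
      rw [ncf_cons (c+1) (d::t) (by simp), ncf_cons c (d::t) (by simp)]
      push_cast; ring

/-- Let `α/β = [b₁, b₂, ..., b_r]` (`r ≥ 2`, all entries `≥ 2`, `0 < β < α` coprime),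
let `α'/β'` (in lowest terms, `0 < β' < α'`) be the value of `[b₂,...,b_r]`, and let
`[c₁,...,c_k]` be the dual expansion of `[b₂,...,b_r]`, i.e. the expansion of
`α'/(α'-β')`. Then the dual expansion `[a₁,...,aₙ]` of `α/β` (the expansion of
`α/(α-β)`) equals `[2, ..., 2, c₁+1, c₂, ..., c_k]` with exactly `b₁ - 2`
leading 2's. -/
theorem dual_expansion_formula (α β α' β' : ℤ)
    (hβ : 0 < β) (hβα : β < α) (hcop : Int.gcd α β = 1)
    (hβ' : 0 < β') (hβα' : β' < α') (hcop' : Int.gcd α' β' = 1)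
    (b₁ : ℤ) (T : List ℤ) (hTne : T ≠ [])
    (h2 : ∀ x ∈ b₁ :: T, 2 ≤ x)
    (hval : ncf (b₁ :: T) = (α : ℚ) / (β : ℚ))
    (hT : ncf T = (α' : ℚ) / (β' : ℚ))
    (c₁ : ℤ) (C : List ℤ) (hC2 : ∀ x ∈ c₁ :: C, 2 ≤ x)
    (hCdual : ncf (c₁ :: C) = (α' : ℚ) / ((α' : ℚ) - (β' : ℚ)))
    (A : List ℤ) (hAne : A ≠ []) (hA2 : ∀ x ∈ A, 2 ≤ x)
    (hAdual : ncf A = (α : ℚ) / ((α : ℚ) - (β : ℚ))) :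
    A = List.replicate (b₁ - 2).toNat 2 ++ ((c₁ + 1) :: C) := by
  have hb1 : 2 ≤ b₁ := h2 b₁ (by simp)
  set R : List ℤ := List.replicate (b₁ - 2).toNat 2 ++ ((c₁ + 1) :: C) with hR
  have hR2 : ∀ x ∈ R, 2 ≤ x := by
    intro x hx
    rw [hR, List.mem_append] at hx
    rcases hx with hx | hx
    · rw [List.eq_of_mem_replicate hx]
    · rcases List.mem_cons.1 hx with rfl | hx
      · have := hC2 c₁ (by simp); omega
      · exact hC2 x (by simp [hx])
  have hRne : R ≠ [] := by simp [hR]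
  have hC2' : ∀ x ∈ (c₁+1) :: C, 2 ≤ x := by
    intro x hx
    rcases List.mem_cons.1 hx with rfl | hx
    · have := hC2 c₁ (by simp); omega
    · exact hC2 x (by simp [hx])
  have hwgt : 1 < ncf ((c₁+1) :: C) := ncf_gt_one _ (by simp) hC2'
  have hrep := ncf_replicate ((c₁+1) :: C) (by simp) hwgt ((b₁-2).toNat)
  have hm : (((b₁-2).toNat : ℕ) : ℚ) = (b₁:ℚ) - 2 := by
    have h := Int.toNat_of_nonneg (by omega : (0:ℤ) ≤ b₁ - 2)
    exact_mod_cast congrArg (Int.cast : ℤ → ℚ) h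
  have hp0 : (0:ℚ) < (β':ℚ) := by exact_mod_cast hβ'
  have hpq : (β':ℚ) < (α':ℚ) := by exact_mod_cast hβα'
  have hb0 : (0:ℚ) < (β:ℚ) := by exact_mod_cast hβ
  have hba : (β:ℚ) < (α:ℚ) := by exact_mod_cast hβα
  have hq0 : (0:ℚ) < (α':ℚ) := lt_trans hp0 hpq
  have hqp : (0:ℚ) < (α':ℚ) - β' := by linarith
  have hab : (0:ℚ) < (α:ℚ) - β := by linarith
  have hb1Q : (2:ℚ) ≤ (b₁:ℚ) := by exact_mod_cast hb1
  have hw : ncf ((c₁+1) :: C) = (α':ℚ)/((α':ℚ)-β') + 1 := by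
    rw [ncf_add_one, hCdual]
  have key : (α:ℚ) * α' = (β:ℚ) * ((b₁:ℚ) * α' - β') := by
    have h1 : (α:ℚ) / β = (b₁:ℚ) - (β':ℚ) / α' := by
      rw [← hval, ncf_cons b₁ T hTne, hT, one_div_div]
    field_simp [hq0.ne'] at h1
    linarith [h1]
  have hRval : ncf R = (α:ℚ) / ((α:ℚ) - β) := by
    rw [hR, hrep, hw, hm]
    have hfrac : (0:ℚ) < (α':ℚ)/((α':ℚ)-β') := by positivity
    have hDpos : (0:ℚ) < ((b₁:ℚ)-2) * ((α':ℚ)/((α':ℚ)-β') + 1) - ((b₁:ℚ)-2) + 1 := by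
      nlinarith
    rw [div_eq_div_iff hDpos.ne' hab.ne']
    field_simp
    ring_nf
    nlinarith [key, sq_nonneg ((α':ℚ) - β')]
  exact ncf_unique A R hA2 hR2 hAne hRne (hAdual.trans hRval.symm)
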